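/- arXiv:1707.07092 — 3 statements merged into one kernel-verified Lean document; each statement's English description precedes it below -/
import Mathlib

section
/- Let n ≥ 1 and let E = (e_{ij}) be a symmetric real n×n matrix that is negative definite (i.e. xᵀEx < 0 for every nonzero x ∈ ℝⁿ) and satisfies e_{ij} ≥ 0 whenever i ≠ j. If a = (a_1, …, a_n) ∈ ℝⁿ is a row vector such that every entry of the row vector aE is ≥ 0, then a_i ≤ 0 for every 1 ≤ i ≤ n. -/
/-- Lemma 2.18(1): Let `E` be a symmetric negative definite real `n × n` matrix with
nonnegative off-diagonal entries. If `a` is a row vector such that every entry of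
the row vector `a * E` is nonnegative, then every entry of `a` is nonpositive. -/
theorem stmt_0 (n : ℕ) (hn : 1 ≤ n) (E : Matrix (Fin n) (Fin n) ℝ)
    (hsymm : E.IsSymm)
    (hnegdef : ∀ x : Fin n → ℝ, x ≠ 0 → dotProduct x (E.mulVec x) < 0)
    (hoffdiag : ∀ i j : Fin n, i ≠ j → 0 ≤ E i j)
    (a : Fin n → ℝ)
    (ha : ∀ j : Fin n, 0 ≤ Matrix.vecMul a E j) :
    ∀ i : Fin n, a i ≤ 0 := by
  set p : Fin n → ℝ := fun i => max (a i) 0 with hpdef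
  set m : Fin n → ℝ := fun i => max (-a i) 0 with hmdef
  have hp0 : ∀ i, 0 ≤ p i := fun i => le_max_right _ _
  have hm0 : ∀ i, 0 ≤ m i := fun i => le_max_right _ _
  have hpm : ∀ i, p i = a i + m i := by
    intro i
    simp only [hpdef, hmdef]
    rcases le_total (a i) 0 with h | h
    · rw [max_eq_right h, max_eq_left (by linarith)]; ring
    · rw [max_eq_left h, max_eq_right (by linarith)]; ring
  have hpm0 : ∀ i, p i * m i = 0 := by
    intro i
    simp only [hpdef, hmdef]
    rcases le_total (a i) 0 with h | h
    · rw [max_eq_right h]; ring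
    · rw [max_eq_right (by linarith : -a i ≤ 0)]; ring
  have hexp : dotProduct p (E.mulVec p)
      = ∑ j, (Matrix.vecMul a E j) * p j + ∑ i, ∑ j, m i * E i j * p j := by
    have e1 : dotProduct p (E.mulVec p) = ∑ i, ∑ j, p i * E i j * p j := by
      simp [dotProduct, Matrix.mulVec, Finset.mul_sum, mul_assoc]
    have e2 : ∑ j, (Matrix.vecMul a E j) * p j = ∑ i, ∑ j, a i * E i j * p j := by
      rw [Finset.sum_comm]
      simp [Matrix.vecMul, dotProduct, Finset.sum_mul]
    rw [e1, e2, ← Finset.sum_add_distrib]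
    refine Finset.sum_congr rfl fun i _ => ?_
    rw [← Finset.sum_add_distrib]
    refine Finset.sum_congr rfl fun j _ => ?_
    rw [hpm i]; ring
  have hkey : 0 ≤ dotProduct p (E.mulVec p) := by
    rw [hexp]
    have h1 : 0 ≤ ∑ j, (Matrix.vecMul a E j) * p j :=
      Finset.sum_nonneg fun j _ => mul_nonneg (ha j) (hp0 j)
    have h2 : 0 ≤ ∑ i, ∑ j, m i * E i j * p j := by
      refine Finset.sum_nonneg fun i _ => Finset.sum_nonneg fun j _ => ?_
      rcases eq_or_ne i j with rfl | hij
      · rw [mul_comm (m i) (E i i), mul_assoc, mul_comm (m i), hpm0 i, mul_zero]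
      · exact mul_nonneg (mul_nonneg (hm0 i) (hoffdiag i j hij)) (hp0 j)
    linarith
  have hpz : p = 0 := by
    by_contra h
    exact absurd hkey (not_le.mpr (hnegdef p h))
  intro i
  have := congrFun hpz i
  simp only [hpdef, Pi.zero_apply] at this
  exact le_of_max_le_left this.le
end

section
/- Let n ≥ 1 and let E = (e_{ij}) be a symmetric real n×n matrix that is negative definite (i.e. xᵀEx < 0 for every nonzero x ∈ ℝⁿ) and satisfies e_{ij} ≥ 0 whenever i ≠ j. Let λ = (λ_1, …, λ_n) ∈ ℝⁿ be a row vector such that every entry of the row vector λE is ≤ 0 and every entry of the row vector (𝟙 − λ)E is ≤ 0, where 𝟙 = (1, 1, …, 1) is the all-ones row vector. Then 0 ≤ λ_i ≤ 1 for every 1 ≤ i ≤ n. -/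
/-- Lemma 2.18(1): if `E` is symmetric negative definite with nonnegative
off-diagonal entries, and `x • E` (row vector product) has all entries
nonpositive, then `x ≥ 0` entrywise. -/
lemma key_lemma_218 (n : ℕ) (E : Matrix (Fin n) (Fin n) ℝ)
    (hsymm : E.IsSymm)
    (hnegdef : ∀ x : Fin n → ℝ, x ≠ 0 → dotProduct x (E.mulVec x) < 0)
    (hoffdiag : ∀ i j : Fin n, i ≠ j → 0 ≤ E i j)
    (x : Fin n → ℝ)
    (hx : ∀ j : Fin n, Matrix.vecMul x E j ≤ 0) :
    ∀ i : Fin n, 0 ≤ x i := by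
  set y : Fin n → ℝ := fun i => max (-(x i)) 0 with hy
  set p : Fin n → ℝ := fun i => max (x i) 0 with hp
  have hy0 : ∀ i, 0 ≤ y i := fun i => le_max_right _ _
  have hp0 : ∀ i, 0 ≤ p i := fun i => le_max_right _ _
  have hyp : ∀ i, y i * p i = 0 := by
    intro i
    rcases le_total (x i) 0 with h | h
    · simp [hp, max_eq_right h, mul_comm]
    · simp [hy, max_eq_right (neg_nonpos_of_nonneg h)]
  have hsub : ∀ i, p i - x i = y i := by
    intro i
    rcases le_total (x i) 0 with h | h
    · simp [hp, hy, max_eq_right h, max_eq_left (neg_nonneg.mpr h)]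
    · simp [hp, hy, max_eq_left h, max_eq_right (neg_nonpos_of_nonneg h)]
  have hyzero : y = 0 := by
    by_contra hyne
    have h1 : dotProduct y (E.mulVec y) < 0 := hnegdef y hyne
    -- dotProduct y (E.mulVec y) = A - B with A ≥ 0, B ≤ 0
    have hEsym : ∀ i j, E i j = E j i := by
      intro i j
      have := congrFun (congrFun hsymm i) j
      simpa [Matrix.transpose_apply] using this.symm
    have hexp : dotProduct y (E.mulVec y) =
        (∑ i, ∑ j, y i * E i j * p j) - ∑ i, y i * Matrix.vecMul x E i := by
      rw [dotProduct]
      rw [← Finset.sum_sub_distrib]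
      apply Finset.sum_congr rfl
      intro i _
      rw [Matrix.mulVec, dotProduct, Finset.mul_sum]
      have hv : y i * Matrix.vecMul x E i = ∑ j, y i * E i j * x j := by
        rw [Matrix.vecMul, dotProduct, Finset.mul_sum]
        apply Finset.sum_congr rfl
        intro j _
        rw [hEsym i j]; ring
      rw [hv, ← Finset.sum_sub_distrib]
      apply Finset.sum_congr rfl
      intro j _
      rw [← hsub j]; ring
    have hA : 0 ≤ ∑ i, ∑ j, y i * E i j * p j := by
      apply Finset.sum_nonneg; intro i _
      apply Finset.sum_nonneg; intro j _
      rcases eq_or_ne i j with rfl | hij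
      · have h : y i * E i i * p i = E i i * (y i * p i) := by ring
        rw [h, hyp i, mul_zero]
      · exact mul_nonneg (mul_nonneg (hy0 i) (hoffdiag i j hij)) (hp0 j)
    have hB : ∑ i, y i * Matrix.vecMul x E i ≤ 0 := by
      apply Finset.sum_nonpos; intro i _
      exact mul_nonpos_of_nonneg_of_nonpos (hy0 i) (hx i)
    rw [hexp] at h1; linarith
  intro i
  have := congrFun hyzero i
  simp only [hy, Pi.zero_apply] at this
  have : max (-(x i)) 0 = 0 := this
  by_contra hneg
  push_neg at hneg
  rw [max_eq_left (by linarith)] at this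
  linarith

/-- Double application of Lemma 2.18(1): if `E` is symmetric negative definite with
nonnegative off-diagonal entries, and both `λ • E` and `(𝟙 - λ) • E` (as row vector
products) have all entries nonpositive, then `0 ≤ λᵢ ≤ 1` for every `i`. -/
theorem stmt_1 (n : ℕ) (hn : 1 ≤ n) (E : Matrix (Fin n) (Fin n) ℝ)
    (hsymm : E.IsSymm)
    (hnegdef : ∀ x : Fin n → ℝ, x ≠ 0 → dotProduct x (E.mulVec x) < 0)
    (hoffdiag : ∀ i j : Fin n, i ≠ j → 0 ≤ E i j)
    (lam : Fin n → ℝ)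
    (hlam : ∀ j : Fin n, Matrix.vecMul lam E j ≤ 0)
    (hlam' : ∀ j : Fin n, Matrix.vecMul (fun i => 1 - lam i) E j ≤ 0) :
    ∀ i : Fin n, 0 ≤ lam i ∧ lam i ≤ 1 := by
  intro i
  have h1 := key_lemma_218 n E hsymm hnegdef hoffdiag lam hlam i
  have h2 := key_lemma_218 n E hsymm hnegdef hoffdiag (fun i => 1 - lam i) hlam' i
  exact ⟨h1, by linarith⟩
end

section
/- Let n ≥ 1 and let c_1, …, c_n ∈ ℝ with c_i ≤ 0 for every 1 ≤ i ≤ n. Let A be the symmetric tridiagonal n×n matrix with diagonal entries A_{ii} = c_i − 2, with A_{i,i+1} = A_{i+1,i} = 1 for 1 ≤ i ≤ n−1, and with all other entries 0. Then there exists a row vector λ = (λ_1, …, λ_n) ∈ ℝⁿ such that λA = (c_1, c_2, …, c_{n−1}, c_n − 1), this λ is unique, and it satisfies 0 < λ_i < 1 for every 1 ≤ i ≤ n. -/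
private def uAux (d : ℕ → ℝ) : ℕ → ℝ
  | 0 => 1
  | 1 => d 0
  | k+2 => d (k+1) * uAux d (k+1) - uAux d k

private lemma uAux_rec (d : ℕ → ℝ) (k : ℕ) :
    uAux d (k+2) = d (k+1) * uAux d (k+1) - uAux d k := rfl

private lemma uAux_grow (d : ℕ → ℝ) (hd : ∀ k, 2 ≤ d k) :
    ∀ k, 1 ≤ uAux d k ∧ uAux d k + 1 ≤ uAux d (k+1) := by
  intro k
  induction k with
  | zero =>
      refine ⟨by simp [uAux], ?_⟩
      simp only [uAux]; linarith [hd 0]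
  | succ m ih =>
      obtain ⟨h1, h2⟩ := ih
      refine ⟨by linarith, ?_⟩
      rw [uAux_rec]
      have := hd (m+1)
      nlinarith

private lemma uAux_mono (d : ℕ → ℝ) (hd : ∀ k, 2 ≤ d k) :
    StrictMono (uAux d) :=
  strictMono_nat_of_lt_succ (fun k => by linarith [(uAux_grow d hd k).2])

/-- Linear-algebraic content of Lemma 3.5: with `c i ≤ 0`, `A` the symmetric
tridiagonal matrix with diagonal `c i - 2` and off-diagonal entries `1`, the system
`λ * A = (c 0, …, c (n-2), c (n-1) - 1)` has a unique solution `λ`, and this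
solution satisfies `0 < λ i < 1` for every `i`. -/
theorem stmt_5 (n : ℕ) (hn : 1 ≤ n) (c : Fin n → ℝ)
    (hc : ∀ i : Fin n, c i ≤ 0)
    (A : Matrix (Fin n) (Fin n) ℝ)
    (hA : ∀ i j : Fin n, A i j =
      if (i : ℕ) = (j : ℕ) then c i - 2
      else if (i : ℕ) + 1 = (j : ℕ) ∨ (j : ℕ) + 1 = (i : ℕ) then 1 else 0)
    (b : Fin n → ℝ)
    (hb : ∀ i : Fin n, b i = if (i : ℕ) = n - 1 then c i - 1 else c i) :
    (∃! lam : Fin n → ℝ, Matrix.vecMul lam A = b) ∧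
      (∀ lam : Fin n → ℝ, Matrix.vecMul lam A = b →
        ∀ i : Fin n, 0 < lam i ∧ lam i < 1) := by
  -- rewrite A as a sum of three indicator terms
  have hA' : ∀ i j : Fin n, A i j =
      (if i = j then c i - 2 else 0) + (if (i:ℕ)+1 = (j:ℕ) then 1 else 0)
        + (if (j:ℕ)+1 = (i:ℕ) then 1 else 0) := by
    intro i j
    rw [hA]
    rcases eq_or_ne (i:ℕ) (j:ℕ) with h | h
    · have hij : i = j := Fin.ext h
      subst hij
      simp
    · rw [if_neg h, if_neg (fun hh : i = j => h (congrArg Fin.val hh))]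
      by_cases h1 : (i:ℕ)+1 = (j:ℕ)
      · rw [if_pos (Or.inl h1), if_pos h1, if_neg (by omega)]; ring
      · by_cases h2 : (j:ℕ)+1 = (i:ℕ)
        · rw [if_pos (Or.inr h2), if_neg h1, if_pos h2]; ring
        · rw [if_neg (by tauto), if_neg h1, if_neg h2]; ring
  -- column formula for vecMul
  have hcol : ∀ (x : Fin n → ℝ) (j : Fin n), Matrix.vecMul x A j =
      x j * (c j - 2) + (∑ i : Fin n, if (i:ℕ)+1 = (j:ℕ) then x i else 0)
        + (∑ i : Fin n, if (j:ℕ)+1 = (i:ℕ) then x i else 0) := by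
    intro x j
    have h0 : Matrix.vecMul x A j = ∑ i, x i * A i j := by
      simp [Matrix.vecMul, dotProduct]
    rw [h0]
    simp only [hA', mul_add, Finset.sum_add_distrib, mul_ite, mul_one, mul_zero]
    congr 1
    congr 1
    rw [Finset.sum_ite_eq' Finset.univ j (fun i => x i * (c i - 2))]
    simp
  -- extension of a vector to ℕ
  set ext : (Fin n → ℝ) → ℕ → ℝ := fun x m => if h : m < n then x ⟨m, h⟩ else 0
    with hext_def
  have hextval : ∀ (x : Fin n → ℝ) (m : ℕ) (h : m < n), ext x m = x ⟨m, h⟩ := by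
    intro x m h
    simp only [hext_def]
    rw [dif_pos h]
  -- evaluation of the two boundary sums
  have hsumL : ∀ (x : Fin n → ℝ) (j : Fin n), 0 < (j:ℕ) →
      (∑ i : Fin n, if (i:ℕ)+1 = (j:ℕ) then x i else 0) = ext x ((j:ℕ)-1) := by
    intro x j hj
    rw [hextval x ((j:ℕ)-1) (by omega)]
    rw [Finset.sum_eq_single (⟨(j:ℕ)-1, by omega⟩ : Fin n)]
    · rw [if_pos]; simp; omega
    · intro i _ hne
      rw [if_neg]
      intro h
      exact hne (Fin.ext (by simp; omega))
    · simp
  have hsumL0 : ∀ (x : Fin n → ℝ) (j : Fin n), (j:ℕ) = 0 →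
      (∑ i : Fin n, if (i:ℕ)+1 = (j:ℕ) then x i else 0) = 0 := by
    intro x j hj
    apply Finset.sum_eq_zero
    intro i _
    rw [if_neg]; omega
  have hsumR : ∀ (x : Fin n → ℝ) (j : Fin n), (j:ℕ)+1 < n →
      (∑ i : Fin n, if (j:ℕ)+1 = (i:ℕ) then x i else 0) = ext x ((j:ℕ)+1) := by
    intro x j hj
    rw [hextval x ((j:ℕ)+1) (by omega)]
    rw [Finset.sum_eq_single (⟨(j:ℕ)+1, hj⟩ : Fin n)]
    · rw [if_pos]; simp
    · intro i _ hne
      rw [if_neg]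
      intro h
      exact hne (Fin.ext (by simp; omega))
    · simp
  have hsumR0 : ∀ (x : Fin n → ℝ) (j : Fin n), (j:ℕ) = n - 1 →
      (∑ i : Fin n, if (j:ℕ)+1 = (i:ℕ) then x i else 0) = 0 := by
    intro x j hj
    apply Finset.sum_eq_zero
    intro i _
    rw [if_neg]
    have := i.isLt
    omega
  -- the recursive sequence
  set d : ℕ → ℝ := fun k => 2 - c ⟨n - 1 - k, by omega⟩ with hd_def
  have hd : ∀ k, 2 ≤ d k := by
    intro k
    have := hc ⟨n - 1 - k, by omega⟩
    simp only [hd_def]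
    linarith
  set u : ℕ → ℝ := uAux d with hu_def
  have hrec : ∀ k, u (k+2) = d (k+1) * u (k+1) - u k := fun k => uAux_rec d k
  have hu0 : u 0 = 1 := rfl
  have hu1d : u 1 = d 0 := rfl
  have hu1 : ∀ k, 1 ≤ u k := fun k => (uAux_grow d hd k).1
  have humono : StrictMono u := uAux_mono d hd
  have hun : 0 < u n := lt_of_lt_of_le one_pos (hu1 n)
  have hune : u n ≠ 0 := ne_of_gt hun
  -- the candidate solution
  set lam0 : Fin n → ℝ := fun i => 1 - u (n - 1 - (i:ℕ)) / u n with hlam0_def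
  have hbd : ∀ i : Fin n, 0 < lam0 i ∧ lam0 i < 1 := by
    intro i
    have h1 : 0 < u (n - 1 - (i:ℕ)) := lt_of_lt_of_le one_pos (hu1 _)
    have h2 : u (n - 1 - (i:ℕ)) < u n := humono (by omega)
    constructor
    · simp only [hlam0_def, sub_pos]
      rw [div_lt_one hun]; exact h2
    · simp only [hlam0_def]
      have : 0 < u (n - 1 - (i:ℕ)) / u n := div_pos h1 hun
      linarith
  -- lam0 is a solution
  have hsol : Matrix.vecMul lam0 A = b := by
    funext j
    rw [hcol, hb]
    have hl : lam0 j = 1 - u (n - 1 - (j:ℕ)) / u n := rfl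
    by_cases hj0 : (j:ℕ) = 0
    · rw [hsumL0 lam0 j hj0]
      by_cases hn1 : n = 1
      · -- n = 1 : single equation
        rw [hsumR0 lam0 j (by omega), if_pos (by omega), hl,
          (by omega : n - 1 - (j:ℕ) = 0), hu0,
          (show u n = u 1 by rw [(by omega : n = 1)]), hu1d]
        have hdv : d 0 = 2 - c j := by
          show 2 - c ⟨n - 1 - 0, by omega⟩ = 2 - c j
          have : (⟨n - 1 - 0, by omega⟩ : Fin n) = j := by
            apply Fin.ext; show n - 1 - 0 = (j:ℕ); omega
          rw [this]
        rw [hdv]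
        have hne : (2:ℝ) - c j ≠ 0 := by have := hc j; intro h; linarith
        field_simp
        ring
      · -- n ≥ 2, j = 0
        have hn2 : 2 ≤ n := by omega
        rw [if_neg (by omega), hsumR lam0 j (by omega),
          hextval lam0 ((j:ℕ)+1) (by omega), hl]
        show (1 - u (n - 1 - (j:ℕ)) / u n) * (c j - 2) + 0
            + (1 - u (n - 1 - ((j:ℕ)+1)) / u n) = c j
        rw [(by omega : n - 1 - (j:ℕ) = n - 1),
          (by omega : n - 1 - ((j:ℕ)+1) = n - 2)]
        have h := hrec (n-2)
        rw [(by omega : n-2+2 = n), (by omega : n-2+1 = n-1)] at h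
        have hdv : d (n-1) = 2 - c j := by
          show 2 - c ⟨n - 1 - (n-1), by omega⟩ = 2 - c j
          have : (⟨n - 1 - (n-1), by omega⟩ : Fin n) = j := by
            apply Fin.ext; show n - 1 - (n-1) = (j:ℕ); omega
          rw [this]
        rw [hdv] at h
        have hne2 : (2 - c j) * u (n-1) - u (n-2) ≠ 0 := by
          rw [← h]; exact hune
        have key : (1 - u (n - 1) / u n) * (c j - 2) + 0 + (1 - u (n - 2) / u n) - c j
            = (-(u n) + (2 - c j) * u (n-1) - u (n-2)) / u n := by
          field_simp
          ring
        have hz : -(u n) + (2 - c j) * u (n-1) - u (n-2) = 0 := by linarith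
        rw [hz, zero_div] at key
        linarith
    · by_cases hjl : (j:ℕ) = n - 1
      · -- j = n-1 ≥ 1
        rw [if_pos hjl, hsumR0 lam0 j hjl, hsumL lam0 j (by omega),
          hextval lam0 ((j:ℕ)-1) (by omega), hl]
        show (1 - u (n - 1 - (j:ℕ)) / u n) * (c j - 2)
            + (1 - u (n - 1 - ((j:ℕ)-1)) / u n) + 0 = c j - 1
        rw [(by omega : n - 1 - (j:ℕ) = 0),
          (by omega : n - 1 - ((j:ℕ)-1) = 1), hu0, hu1d]
        have hdv : d 0 = 2 - c j := by
          show 2 - c ⟨n - 1 - 0, by omega⟩ = 2 - c j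
          have : (⟨n - 1 - 0, by omega⟩ : Fin n) = j := by
            apply Fin.ext; show n - 1 - 0 = (j:ℕ); omega
          rw [this]
        rw [hdv]
        field_simp
        ring
      · -- interior j
        rw [if_neg hjl, hsumL lam0 j (by omega), hsumR lam0 j (by omega),
          hextval lam0 ((j:ℕ)-1) (by omega), hextval lam0 ((j:ℕ)+1) (by omega), hl]
        obtain ⟨K, hK⟩ : ∃ K, n - 1 - (j:ℕ) = K + 1 :=
          ⟨n - 1 - (j:ℕ) - 1, by omega⟩
        show (1 - u (n - 1 - (j:ℕ)) / u n) * (c j - 2)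
            + (1 - u (n - 1 - ((j:ℕ)-1)) / u n)
            + (1 - u (n - 1 - ((j:ℕ)+1)) / u n) = c j
        rw [(by omega : n - 1 - (j:ℕ) = K + 1),
          (by omega : n - 1 - ((j:ℕ)-1) = K + 2),
          (by omega : n - 1 - ((j:ℕ)+1) = K), hrec K]
        have hdv : d (K+1) = 2 - c j := by
          show 2 - c ⟨n - 1 - (K+1), by omega⟩ = 2 - c j
          have : (⟨n - 1 - (K+1), by omega⟩ : Fin n) = j := by
            apply Fin.ext; show n - 1 - (K+1) = (j:ℕ); omega
          rw [this]
        rw [hdv]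
        field_simp
        ring
  -- uniqueness: any solution equals lam0
  have huniq : ∀ lam : Fin n → ℝ, Matrix.vecMul lam A = b → lam = lam0 := by
    intro lam hlam
    set δ : Fin n → ℝ := fun i => lam i - lam0 i with hδ_def
    have hδeq : ∀ j : Fin n,
        δ j * (c j - 2) + (∑ i : Fin n, if (i:ℕ)+1 = (j:ℕ) then δ i else 0)
          + (∑ i : Fin n, if (j:ℕ)+1 = (i:ℕ) then δ i else 0) = 0 := by
      intro j
      have h1 := congrFun hlam j
      have h2 := congrFun hsol j
      rw [hcol] at h1 h2
      have e1 : (∑ i : Fin n, if (i:ℕ)+1 = (j:ℕ) then δ i else 0)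
          = (∑ i : Fin n, if (i:ℕ)+1 = (j:ℕ) then lam i else 0)
            - (∑ i : Fin n, if (i:ℕ)+1 = (j:ℕ) then lam0 i else 0) := by
        rw [← Finset.sum_sub_distrib]
        apply Finset.sum_congr rfl
        intro i _
        split <;> simp [hδ_def]
      have e2 : (∑ i : Fin n, if (j:ℕ)+1 = (i:ℕ) then δ i else 0)
          = (∑ i : Fin n, if (j:ℕ)+1 = (i:ℕ) then lam i else 0)
            - (∑ i : Fin n, if (j:ℕ)+1 = (i:ℕ) then lam0 i else 0) := by
        rw [← Finset.sum_sub_distrib]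
        apply Finset.sum_congr rfl
        intro i _
        split <;> simp [hδ_def]
      rw [e1, e2]
      simp only [hδ_def]
      linear_combination h1 - h2
    set e : ℝ := ext δ (n-1) with he_def
    have hdj : ∀ (j : Fin n), δ j = ext δ (j:ℕ) := by
      intro j
      rw [hextval δ (j:ℕ) j.isLt, Fin.eta]
    have hclaim : ∀ k, k ≤ n - 1 → ext δ (n-1-k) = e * u k := by
      intro k
      induction k using Nat.strong_induction_on with
      | _ k ih =>
        intro hk
        match k with
        | 0 =>
          rw [(by omega : n-1-0 = n-1), hu0, mul_one]
        | 1 =>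
          have hn2 : 2 ≤ n := by omega
          obtain ⟨jl, hjl⟩ : ∃ jl : Fin n, (jl:ℕ) = n - 1 := ⟨⟨n-1, by omega⟩, rfl⟩
          have hj := hδeq jl
          rw [hsumR0 δ jl hjl, hsumL δ jl (by omega), hjl, hdj jl, hjl] at hj
          have hdv : d 0 = 2 - c jl := by
            show 2 - c ⟨n - 1 - 0, by omega⟩ = 2 - c jl
            have : (⟨n - 1 - 0, by omega⟩ : Fin n) = jl := by
              apply Fin.ext; show n - 1 - 0 = (jl:ℕ); omega
            rw [this]
          rw [hu1d, hdv]
          linear_combination hj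
        | (m+2) =>
          have hm : m + 2 ≤ n - 1 := hk
          obtain ⟨jm, hjm⟩ : ∃ jm : Fin n, (jm:ℕ) = n - 1 - (m+1) :=
            ⟨⟨n-1-(m+1), by omega⟩, rfl⟩
          have hj := hδeq jm
          rw [hsumL δ jm (by omega), hsumR δ jm (by omega), hjm, hdj jm, hjm,
            (by omega : n - 1 - (m+1) - 1 = n - 1 - (m+2)),
            (by omega : n - 1 - (m+1) + 1 = n - 1 - m)] at hj
          rw [ih (m+1) (by omega) (by omega), ih m (by omega) (by omega)] at hj
          have hdv : d (m+1) = 2 - c jm := by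
            show 2 - c ⟨n - 1 - (m+1), by omega⟩ = 2 - c jm
            have : (⟨n - 1 - (m+1), by omega⟩ : Fin n) = jm := by
              apply Fin.ext; show n - 1 - (m+1) = (jm:ℕ); omega
            rw [this]
          rw [hrec m, hdv]
          linear_combination hj
    have he0 : e = 0 := by
      obtain ⟨j0, hj0⟩ : ∃ j0 : Fin n, (j0:ℕ) = 0 := ⟨⟨0, by omega⟩, rfl⟩
      by_cases hn1 : n = 1
      · have hj := hδeq j0
        rw [hsumL0 δ j0 hj0, hsumR0 δ j0 (by omega)] at hj
        have hcne : c j0 - 2 ≠ 0 := by have := hc j0; intro h; linarith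
        have hd0 : δ j0 = 0 := by
          rcases mul_eq_zero.mp (by linarith : δ j0 * (c j0 - 2) = 0) with h | h
          · exact h
          · exact absurd h hcne
        rw [he_def, (by omega : n - 1 = 0), ← hj0, ← hdj j0]
        exact hd0
      · have hn2 : 2 ≤ n := by omega
        have hj := hδeq j0
        rw [hsumL0 δ j0 hj0, hsumR δ j0 (by omega), hj0, hdj j0, hj0] at hj
        have h1 := hclaim (n-1) le_rfl
        rw [(by omega : n - 1 - (n-1) = 0)] at h1
        have h2 := hclaim (n-2) (by omega)
        rw [(by omega : n - 1 - (n-2) = 0 + 1)] at h2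
        rw [h1, h2] at hj
        have h := hrec (n-2)
        rw [(by omega : n-2+2 = n), (by omega : n-2+1 = n-1)] at h
        have hdv : d (n-1) = 2 - c j0 := by
          show 2 - c ⟨n - 1 - (n-1), by omega⟩ = 2 - c j0
          have : (⟨n - 1 - (n-1), by omega⟩ : Fin n) = j0 := by
            apply Fin.ext; show n - 1 - (n-1) = (j0:ℕ); omega
          rw [this]
        have hzero : e * u n = 0 := by
          rw [h, hdv]
          linear_combination -hj
        rcases mul_eq_zero.mp hzero with h' | h'
        · exact h'
        · exact absurd h' hune
    funext i
    have h2 := hclaim (n-1-(i:ℕ)) (by omega)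
    rw [(by omega : n - 1 - (n-1-(i:ℕ)) = (i:ℕ)), he0, zero_mul, ← hdj i] at h2
    have : lam i - lam0 i = 0 := h2
    linarith
  constructor
  · exact ⟨lam0, hsol, fun y hy => huniq y hy⟩
  · intro lam hlam i
    rw [huniq lam hlam]
    exact hbd i
end
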